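/- With λ = (−1+√−7)/2, μ = λ/λ̄, H = [[3, λ̄, λ̄],[λ, 3, λ̄],[λ, λ, 3]], and W = [[λ, 1, 0],[0, λ, 1],[μ, 0, λ]], one has H = W·W*, where * denotes conjugate transpose. -/
import Mathlib


open Complex Matrix in
theorem H_eq_W_mul_Wstar
    (lam lamb μ : ℂ) (hlam : lam = (-1 + Complex.I * Real.sqrt 7) / 2)
    (hlamb : lamb = (-1 - Complex.I * Real.sqrt 7) / 2) (hμ : μ = lam / lamb)
    (H W : Matrix (Fin 3) (Fin 3) ℂ)
    (hH : H = !![3, lamb, lamb; lam, 3, lamb; lam, lam, 3])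
    (hW : W = !![lam, 1, 0; 0, lam, 1; μ, 0, lam]) :
    H = W * Wᴴ := by
  have h7 : (Real.sqrt 7 : ℂ)^2 = 7 := by
    norm_cast
    rw [Real.sq_sqrt] <;> norm_num
  have h2 : lam * lamb = 2 := by
    have key : (-1 + Complex.I * Real.sqrt 7) * (-1 - Complex.I * Real.sqrt 7) = 8 := by
      linear_combination (-Complex.I ^ 2) * h7 + (-7 : ℂ) * Complex.I_sq
    rw [hlam, hlamb, div_mul_div_comm, key]
    norm_num
  have hcl : starRingEnd ℂ lam = lamb := by
    rw [hlam, hlamb]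
    simp only [map_div₀, map_add, map_sub, map_neg, _root_.map_one, _root_.map_mul, Complex.conj_I,
      Complex.conj_ofReal, map_ofNat]
    ring
  have hlamne : lam ≠ 0 := by
    intro h; rw [h, zero_mul] at h2; norm_num at h2
  have hlambne : lamb ≠ 0 := by
    intro h; rw [h, mul_zero] at h2; norm_num at h2
  have hcl2 : starRingEnd ℂ lamb = lam := by
    rw [← hcl, Complex.conj_conj]
  have hcmu : starRingEnd ℂ μ = lamb / lam := by
    rw [hμ, map_div₀, hcl, hcl2]
  subst hH hW hμ
  ext i j
  fin_cases i <;> fin_cases j <;>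
    simp [Matrix.mul_apply, Fin.sum_univ_three, Matrix.conjTranspose_apply, hcl, hcl2, hcmu,
      Matrix.vecHead, Matrix.vecTail]
  all_goals try field_simp
  all_goals first
    | linear_combination -h2
    | linear_combination h2
    | linear_combination -2 * h2
    | linear_combination 2 * h2
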